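/- Let D be a connected oriented graph with no induced TT3, no directed triangle, and no induced S_{1,1} (a directed path on 3 vertices whose endpoints are non-adjacent). Then every vertex of D is a source or a sink; consequently D is an extension of TT2, i.e., the underlying graph of D is bipartite with all arcs oriented from sources to sinks, and χ(D) ≤ 2. -/

import Mathlib

/-- The underlying simple graph of a digraph given by its arc relation. -/
def underlying {V : Type*} (A : V → V → Prop) : SimpleGraph V where
  Adj x y := x ≠ y ∧ (A x y ∨ A y x)
  symm := by constructor; intro x y h; exact ⟨h.1.symm, h.2.symm⟩
  loopless := by constructor; intro x h; exact h.1 rfl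

theorem stmt6 {V : Type*} [Fintype V] (A : V → V → Prop)
    (hasym : ∀ x y, A x y → ¬ A y x)
    (hconn : (underlying A).Connected)
    (hTT3 : ¬ ∃ u v w : V, A u v ∧ A v w ∧ A u w)
    (hC3 : ¬ ∃ u v w : V, A u v ∧ A v w ∧ A w u)
    (hS11 : ¬ ∃ a b c : V, A a b ∧ A b c ∧ ¬ (underlying A).Adj a c) :
    (∀ v : V, (∀ u, ¬ A u v) ∨ (∀ u, ¬ A v u)) ∧
    (∃ S : Set V, ∀ x y, A x y → x ∈ S ∧ y ∉ S) ∧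
    (underlying A).chromaticNumber ≤ 2 := by
  classical
  have key : ∀ a b c : V, A a b → A b c → False := by
    intro a b c hab hbc
    by_cases h : (underlying A).Adj a c
    · rcases h.2 with h' | h'
      · exact hTT3 ⟨a, b, c, hab, hbc, h'⟩
      · exact hC3 ⟨a, b, c, hab, hbc, h'⟩
    · exact hS11 ⟨a, b, c, hab, hbc, h⟩
  refine ⟨?_, ⟨{x | ∃ y, A x y}, ?_⟩, ?_⟩
  · intro v
    by_cases h : ∃ u, A v u
    · left; intro u hu
      obtain ⟨w, hw⟩ := h
      exact key u v w hu hw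
    · right; intro u hu; exact h ⟨u, hu⟩
  · intro x y hxy
    exact ⟨⟨y, hxy⟩, fun ⟨z, hz⟩ => key x y z hxy hz⟩
  · have hcol : (underlying A).Colorable 2 := by
      refine ⟨⟨fun v => if ∃ y, A v y then 0 else 1, ?_⟩⟩
      intro x y hxy
      rcases hxy.2 with h | h
      · have hx : ∃ z, A x z := ⟨y, h⟩
        have hy : ¬ ∃ z, A y z := fun ⟨z, hz⟩ => key x y z h hz
        simp [hx, hy]
      · have hy : ∃ z, A y z := ⟨x, h⟩
        have hx : ¬ ∃ z, A x z := fun ⟨z, hz⟩ => key y x z h hz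
        simp [hx, hy]
    exact hcol.chromaticNumber_le
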